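/- Let K be a loop-free unital free augmented directed complex, let x ∈ νK, let q ≥ 0 and let α be a sign. If a and a′ are distinct basis elements in the support of x_{q+1}^α, then ∂⁺a and ∂⁺a′ have disjoint supports, and ∂⁻a and ∂⁻a′ have disjoint supports; moreover, for every basis element a in the support of x_{q+1}^α, every basis element in the support of ∂⁺a or of ∂⁻a lies in the support of g_q^α(x). (Hence the edges and vertices of the network G_q^α(x) are well defined: each edge has at most one source vertex and at most one target vertex.) -/

import Mathlib

open Finsupp

/-- A free augmented directed complex, encoded by its distinguished graded basis:
`B` is the set of basis elements, `dim` the dimension function, `bd a` the boundary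
chain of a basis element `a`, and `eps` the augmentation (supported in dimension 0). -/
structure FADC where
  B : Type
  dim : B → ℕ
  bd : B → (B →₀ ℤ)
  eps : B → ℤ
  bd_dim : ∀ a b, b ∈ (bd a).support → dim b + 1 = dim a
  eps_dim : ∀ b, 0 < dim b → eps b = 0
  bd_bd : ∀ a : B, ((bd a).sum fun b n => n • bd b) = 0
  eps_bd : ∀ a : B, ((bd a).sum fun b n => n * eps b) = 0

namespace FADC

variable (K : FADC)

/-- The boundary homomorphism `∂`, extended to chains. -/
noncomputable def bdc (c : K.B →₀ ℤ) : K.B →₀ ℤ := c.sum fun b n => n • K.bd b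

/-- The augmentation `ε`, extended to chains. -/
noncomputable def epsc (c : K.B →₀ ℤ) : ℤ := c.sum fun b n => n * K.eps b

/-- `∂⁺c`, the positive part of `∂c`. -/
noncomputable def bdp (c : K.B →₀ ℤ) : K.B →₀ ℤ := (K.bdc c).mapRange (fun n => max n 0) (by simp)

/-- `∂⁻c`, the negative part of `∂c`. -/
noncomputable def bdm (c : K.B →₀ ℤ) : K.B →₀ ℤ := (-K.bdc c).mapRange (fun n => max n 0) (by simp)

/-- `K` is unital if `ε((∂⁻)^q a) = ε((∂⁺)^q a) = 1` for every `q`-dimensional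
basis element `a`. -/
def Unital : Prop := ∀ a : K.B,
  K.epsc (K.bdm^[K.dim a] (Finsupp.single a 1)) = 1 ∧
  K.epsc (K.bdp^[K.dim a] (Finsupp.single a 1)) = 1

/-- `K` is loop-free if its basis elements admit a (strict) partial order such that
for every basis element `a` and every `r > 0`, the basis elements occurring in
`(∂⁻)^r a` strictly precede those occurring in `(∂⁺)^r a`. -/
def LoopFree : Prop :=
  ∃ lt : K.B → K.B → Prop, IsStrictOrder K.B lt ∧
    ∀ (a : K.B) (r : ℕ), 0 < r →
      ∀ b ∈ (K.bdm^[r] (Finsupp.single a 1)).support,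
        ∀ b' ∈ (K.bdp^[r] (Finsupp.single a 1)).support, lt b b'

/-- `K` is atomic of dimension `n`. -/
def Atomic (n : ℕ) : Prop :=
  (∀ b : K.B, K.dim b ≤ n) ∧
  (∃! g : K.B, K.dim g = n) ∧
  (∀ b : K.B, K.dim b < n → ∃ a : K.B, K.dim b < K.dim a ∧
    (b ∈ (K.bdm (Finsupp.single a 1)).support ∨ b ∈ (K.bdp (Finsupp.single a 1)).support))

/-- `g_q^α(x)`: given `x_q^- = xq` and `x_{q+1}^α = c`, this is
`x_q^- + ∂⁺a_1 + … + ∂⁺a_k` where `a_1, …, a_k` are the terms of `c`. -/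
noncomputable def gch (xq c : K.B →₀ ℤ) : K.B →₀ ℤ :=
  xq + c.sum fun b n => n • K.bdp (Finsupp.single b 1)

/-- The negative chains `⟨K⟩_q^- = (∂⁻)^{n-q} g` of the canonical atom. -/
noncomputable def atomNeg (g : K.B) (n q : ℕ) : K.B →₀ ℤ :=
  if q ≤ n then K.bdm^[n - q] (Finsupp.single g 1) else 0

/-- The positive chains `⟨K⟩_q^+ = (∂⁺)^{n-q} g` of the canonical atom. -/
noncomputable def atomPos (g : K.B) (n q : ℕ) : K.B →₀ ℤ :=
  if q ≤ n then K.bdp^[n - q] (Finsupp.single g 1) else 0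

end FADC

/-- Membership in `νK`: the double sequence `(x_0^-, x_0^+ | x_1^-, x_1^+ | …)`,
given by `xm` and `xp`, is a member of `νK`. -/
structure NuMem (K : FADC) (xm xp : ℕ → (K.B →₀ ℤ)) : Prop where
  dim_m : ∀ q, ∀ b ∈ (xm q).support, K.dim b = q
  dim_p : ∀ q, ∀ b ∈ (xp q).support, K.dim b = q
  nonneg_m : ∀ q b, 0 ≤ xm q b
  nonneg_p : ∀ q b, 0 ≤ xp q b
  fin : ∃ n, ∀ q, n < q → xm q = 0 ∧ xp q = 0
  eps_m : K.epsc (xm 0) = 1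
  eps_p : K.epsc (xp 0) = 1
  bd_m : ∀ q, K.bdc (xm (q + 1)) = xp q - xm q
  bd_p : ∀ q, K.bdc (xp (q + 1)) = xp q - xm q

/-- `K` together with the class `thin` of thin basis elements is an
`n`-dimensional opetopic directed complex. -/
structure IsODC (K : FADC) (thin : K.B → Prop) (n : ℕ) : Prop where
  atomic : K.Atomic n
  loopFree : K.LoopFree
  unital : K.Unital
  thin_pos : ∀ b, thin b → 0 < K.dim b
  bdp_basis : ∀ b : K.B, 0 < K.dim b →
    ∃ a : K.B, ¬ thin a ∧ K.bdp (Finsupp.single b 1) = Finsupp.single a 1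
  bdm_thin : ∀ b : K.B, thin b →
    ∃ a : K.B, ¬ thin a ∧ K.bdm (Finsupp.single b 1) = Finsupp.single a 1

/-- An opetopic directed complex is reduced if every thin basis element is `∂⁻a`
for some other basis element `a`. -/
def ODCReduced (K : FADC) (thin : K.B → Prop) : Prop :=
  ∀ b, thin b → ∃ a, a ≠ b ∧ K.bdm (Finsupp.single a 1) = Finsupp.single b 1

/-- A network: finite sets of edges and vertices with partially defined source and
target functions; input edges are those with no source, output edges those with no
target. -/
structure Network where
  E : Type
  V : Type
  finE : Finite E
  finV : Finite V
  src : E → Option V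
  tgt : E → Option V

namespace Network

variable (N : Network)

/-- One step of a path: the target of `e` is the source of `e'`. -/
def step (e e' : N.E) : Prop := ∃ v : N.V, N.tgt e = some v ∧ N.src e' = some v

/-- There is a path from `e` to `e'`. -/
def PathTo (e e' : N.E) : Prop := Relation.ReflTransGen N.step e e'

/-- A network is acyclic if there is no nontrivial path from an edge to itself. -/
def Acyclic : Prop := ∀ e : N.E, ¬ Relation.TransGen N.step e e

/-- A network is linear if it is acyclic and consists of a single path
`e_0, v_1, e_1, …, v_k, e_k`. -/
def Linear : Prop := N.Acyclic ∧
  ∃ (k : ℕ) (e : Fin (k + 1) ≃ N.E) (v : Fin k ≃ N.V),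
    N.src (e 0) = none ∧ N.tgt (e (Fin.last k)) = none ∧
    ∀ i : Fin k, N.tgt (e i.castSucc) = some (v i) ∧ N.src (e i.succ) = some (v i)

/-- A network is confluent if it is acyclic, has a unique output edge, and every
vertex is the source of exactly one edge and the target of at least one edge. -/
def Confluent : Prop := N.Acyclic ∧ (∃! e : N.E, N.tgt e = none) ∧
  (∀ v : N.V, ∃! e : N.E, N.src e = some v) ∧ (∀ v : N.V, ∃ e : N.E, N.tgt e = some v)

end Network

/-- An opetopic network: an acyclic network with a unique output edge, together with
thin edges (which are inputs) and thin vertices (each the target of exactly one edge,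
which is not thin). -/
structure OpetopicNetwork extends Network where
  thinE : E → Prop
  thinV : V → Prop
  acyclic : toNetwork.Acyclic
  out_unique : ∃! e : E, tgt e = none
  thinE_input : ∀ e, thinE e → src e = none
  thinV_unique : ∀ v, thinV v → ∃! e, tgt e = some v
  thinV_nonthin : ∀ v e, thinV v → tgt e = some v → ¬ thinE e

/-- An opetopic network is reduced if every thin edge has a target vertex which is
the target of no other edge. -/
def OpetopicNetwork.Reduced (N : OpetopicNetwork) : Prop :=
  ∀ e, N.thinE e → ∃ v, N.tgt e = some v ∧ ∀ e', N.tgt e' = some v → e' = e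

/-- `c` is a constellation from `N` to `P`: a bijection from the vertices of `N` to
the input edges of `P`, preserving thinness, such that for every edge `e` of `P`
there is exactly one edge of `N` with a source but not a target in the preimage of
`I_e` (the input edges of `P` from which there is a path to `e`). -/
def IsConstellation (N P : OpetopicNetwork) (c : N.V → P.E) : Prop :=
  (∀ v, P.src (c v) = none) ∧
  Function.Injective c ∧
  (∀ e : P.E, P.src e = none → ∃ v, c v = e) ∧
  (∀ v, N.thinV v ↔ P.thinE (c v)) ∧
  (∀ e : P.E, ∃! e' : N.E,
    (∃ v, N.src e' = some v ∧ P.toNetwork.PathTo (c v) e) ∧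
    ¬ (∃ v, N.tgt e' = some v ∧ P.toNetwork.PathTo (c v) e))

/-- An `n`-dimensional opetopic sequence `N_0 → N_1 → … → N_n`. -/
structure OpetopicSequence (n : ℕ) where
  N : Fin (n + 1) → OpetopicNetwork
  c : ∀ q : Fin n, (N q.castSucc).V → (N q.succ).E
  constell : ∀ q : Fin n, IsConstellation (N q.castSucc) (N q.succ) (c q)
  linear0 : (N 0).toNetwork.Linear
  noThin0 : ∀ e, ¬ (N 0).thinE e
  top_single : ∃! _e : (N (Fin.last n)).E, True
  top_noV : IsEmpty (N (Fin.last n)).V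

/-- An isomorphism of opetopic sequences: families of bijections on edges and
vertices preserving sources, targets, thin edges and thin vertices, and commuting
with the constellations. -/
def SeqIso (n : ℕ) (S S' : OpetopicSequence n) : Prop :=
  ∃ (fE : ∀ q : Fin (n + 1), (S.N q).E ≃ (S'.N q).E)
    (fV : ∀ q : Fin (n + 1), (S.N q).V ≃ (S'.N q).V),
    (∀ q : Fin (n + 1),
      (∀ e v, (S.N q).src e = some v ↔ (S'.N q).src (fE q e) = some (fV q v)) ∧
      (∀ e v, (S.N q).tgt e = some v ↔ (S'.N q).tgt (fE q e) = some (fV q v)) ∧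
      (∀ e, (S.N q).thinE e ↔ (S'.N q).thinE (fE q e)) ∧
      (∀ v, (S.N q).thinV v ↔ (S'.N q).thinV (fV q v))) ∧
    (∀ q : Fin n, ∀ v, fE q.succ (S.c q v) = S'.c q (fV q.castSucc v))

/-- The opetopic sequence `S` realizes the sequence
`G_0^-(⟨K⟩) → … → G_n^-(⟨K⟩)` associated to the opetopic directed complex `K`
(with top basis element `g` and thin elements `thin`): the edges of `S.N q`
correspond bijectively to the terms of `g_q^-(⟨K⟩)`, the vertices to the terms of
`⟨K⟩_{q+1}^-`, sources, targets and thinness are as prescribed by `∂⁺`, `∂⁻` and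
`thin`, and the constellations are the identity correspondences. -/
def RealizedBy (K : FADC) (thin : K.B → Prop) (n : ℕ) (g : K.B)
    (S : OpetopicSequence n) : Prop :=
  ∃ (eE : ∀ q : Fin (n + 1), (S.N q).E → K.B)
    (eV : ∀ q : Fin (n + 1), (S.N q).V → K.B),
    (∀ q : Fin (n + 1),
      Function.Injective (eE q) ∧
      (∀ ed, eE q ed ∈ (K.gch (K.atomNeg g n q.1) (K.atomNeg g n (q.1 + 1))).support) ∧
      (∀ b ∈ (K.gch (K.atomNeg g n q.1) (K.atomNeg g n (q.1 + 1))).support,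
        ∃ ed, eE q ed = b) ∧
      Function.Injective (eV q) ∧
      (∀ v, eV q v ∈ (K.atomNeg g n (q.1 + 1)).support) ∧
      (∀ b ∈ (K.atomNeg g n (q.1 + 1)).support, ∃ v, eV q v = b) ∧
      (∀ ed v, (S.N q).src ed = some v ↔
        eE q ed ∈ (K.bdp (Finsupp.single (eV q v) 1)).support) ∧
      (∀ ed v, (S.N q).tgt ed = some v ↔
        eE q ed ∈ (K.bdm (Finsupp.single (eV q v) 1)).support) ∧
      (∀ ed, (S.N q).thinE ed ↔ thin (eE q ed)) ∧
      (∀ v, (S.N q).thinV v ↔ thin (eV q v))) ∧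
    (∀ q : Fin n, ∀ v, eE q.succ (S.c q v) = eV q.castSucc v)

/-- A bundled `n`-dimensional opetopic directed complex. -/
structure ODCBundle (n : ℕ) where
  K : FADC
  thin : K.B → Prop
  g : K.B
  dim_g : K.dim g = n
  isODC : IsODC K thin n

/-- Isomorphism of (bundled) opetopic directed complexes: a dimension- and
thinness-preserving bijection of bases commuting with boundaries and augmentations. -/
def ODCIso {n : ℕ} (A A' : ODCBundle n) : Prop :=
  ∃ φ : A.K.B ≃ A'.K.B,
    (∀ b, A'.K.dim (φ b) = A.K.dim b) ∧
    (∀ b, A'.thin (φ b) ↔ A.thin b) ∧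
    (∀ b, A'.K.bd (φ b) = Finsupp.equivMapDomain φ (A.K.bd b)) ∧
    (∀ b, A'.K.eps (φ b) = A.K.eps b)

section Stmt9Aux

namespace FADC

variable {K : FADC}

/-- `bdc` as an additive homomorphism. -/
noncomputable def bdcH (K : FADC) : (K.B →₀ ℤ) →+ (K.B →₀ ℤ) :=
  Finsupp.liftAddHom fun b => AddMonoidHom.mk' (fun n => n • K.bd b) fun m n => add_smul m n _

lemma bdcH_eq (c : K.B →₀ ℤ) : K.bdcH c = K.bdc c := by
  simp [bdcH, Finsupp.liftAddHom_apply, bdc]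

/-- `epsc` as an additive homomorphism. -/
noncomputable def epscH (K : FADC) : (K.B →₀ ℤ) →+ ℤ :=
  Finsupp.liftAddHom fun b => AddMonoidHom.mulRight (K.eps b)

lemma epscH_eq (c : K.B →₀ ℤ) : K.epscH c = K.epsc c := by
  simp [epscH, Finsupp.liftAddHom_apply, epsc]

/-- total mass of a chain -/
noncomputable def sigH (K : FADC) : (K.B →₀ ℤ) →+ ℤ :=
  Finsupp.liftAddHom fun _ => AddMonoidHom.id ℤ

lemma sigH_single (a : K.B) (n : ℤ) : K.sigH (Finsupp.single a n) = n := by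
  simp [sigH]

lemma sigH_eq (c : K.B →₀ ℤ) : K.sigH c = ∑ a ∈ c.support, c a := by
  simp [sigH, Finsupp.liftAddHom_apply, Finsupp.sum]

lemma le_sigH (c : K.B →₀ ℤ) (hc : ∀ a, 0 ≤ c a) (a : K.B) : c a ≤ K.sigH c := by
  rw [sigH_eq]
  by_cases h : a ∈ c.support
  · exact Finset.single_le_sum (fun x _ => hc x) h
  · rw [Finsupp.notMem_support_iff.1 h]
    exact Finset.sum_nonneg fun x _ => hc x

lemma bdc_single (a : K.B) : K.bdc (Finsupp.single a 1) = K.bd a := by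
  rw [bdc, Finsupp.sum_single_index] <;> simp

lemma bdc_apply (c : K.B →₀ ℤ) (b : K.B) :
    K.bdc c b = ∑ a ∈ c.support, c a * K.bd a b := by
  rw [bdc, Finsupp.sum_apply, Finsupp.sum]
  apply Finset.sum_congr rfl
  intro a _
  rw [Finsupp.smul_apply, smul_eq_mul]

lemma bdp_single_apply (a : K.B) (b : K.B) :
    K.bdp (Finsupp.single a 1) b = max (K.bd a b) 0 := by
  rw [bdp, Finsupp.mapRange_apply, bdc_single]

lemma bdm_single_apply (a : K.B) (b : K.B) :
    K.bdm (Finsupp.single a 1) b = max (-K.bd a b) 0 := by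
  rw [bdm, Finsupp.mapRange_apply, Finsupp.neg_apply, bdc_single]

lemma mem_bdp_single {a b : K.B} :
    b ∈ (K.bdp (Finsupp.single a 1)).support ↔ 0 < K.bd a b := by
  rw [Finsupp.mem_support_iff, bdp_single_apply]; omega

lemma mem_bdm_single {a b : K.B} :
    b ∈ (K.bdm (Finsupp.single a 1)).support ↔ K.bd a b < 0 := by
  rw [Finsupp.mem_support_iff, bdm_single_apply]; omega

lemma bdc_zero : K.bdc 0 = 0 := by rw [← bdcH_eq]; exact map_zero _

lemma epsc_zero : K.epsc 0 = 0 := by rw [← epscH_eq]; exact map_zero _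

lemma bdp_zero : K.bdp 0 = 0 := by
  rw [bdp, bdc_zero]
  ext b
  simp

lemma bdm_zero : K.bdm 0 = 0 := by
  rw [bdm]
  ext b
  simp [bdc_zero]

lemma bdc_bd (a : K.B) : K.bdc (K.bd a) = 0 := K.bd_bd a

lemma epsc_bd (a : K.B) : K.epsc (K.bd a) = 0 := K.eps_bd a

lemma bdcH_single (a : K.B) (n : ℤ) : K.bdcH (Finsupp.single a n) = n • K.bd a := by
  simp [bdcH]

lemma bdc_bdc (c : K.B →₀ ℤ) : K.bdc (K.bdc c) = 0 := by
  rw [← bdcH_eq, ← bdcH_eq]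
  induction c using Finsupp.induction with
  | zero => simp
  | single_add a n f _ _ ih =>
      rw [map_add, map_add, bdcH_single, map_zsmul, bdcH_eq, bdc_bd, smul_zero, zero_add, ih]

lemma epsc_bdc (c : K.B →₀ ℤ) : K.epsc (K.bdc c) = 0 := by
  rw [← bdcH_eq, ← epscH_eq]
  induction c using Finsupp.induction with
  | zero => simp
  | single_add a n f _ _ ih =>
      rw [map_add, map_add, bdcH_single, map_zsmul, epscH_eq, epsc_bd, smul_zero, zero_add, ih]

lemma exists_pos_bd (hU : K.Unital) (a : K.B) (ha : 1 ≤ K.dim a) :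
    ∃ b, 0 < K.bd a b := by
  by_contra h
  push_neg at h
  have h0 : K.bdp (Finsupp.single a 1) = 0 := by
    ext b
    rw [bdp_single_apply]
    have := h b
    simp; omega
  obtain ⟨r, hr⟩ : ∃ r, K.dim a = r + 1 := ⟨K.dim a - 1, by omega⟩
  have h1 := (hU a).2
  rw [hr, Function.iterate_succ_apply, h0, Function.iterate_fixed bdp_zero, epsc_zero] at h1
  exact absurd h1 (by norm_num)

lemma exists_neg_bd (hU : K.Unital) (a : K.B) (ha : 1 ≤ K.dim a) :
    ∃ b, K.bd a b < 0 := by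
  by_contra h
  push_neg at h
  have h0 : K.bdm (Finsupp.single a 1) = 0 := by
    ext b
    rw [bdm_single_apply]
    have := h b
    simp; omega
  obtain ⟨r, hr⟩ : ∃ r, K.dim a = r + 1 := ⟨K.dim a - 1, by omega⟩
  have h1 := (hU a).1
  rw [hr, Function.iterate_succ_apply, h0, Function.iterate_fixed bdm_zero, epsc_zero] at h1
  exact absurd h1 (by norm_num)

end FADC

end Stmt9Aux

section Stmt9Order

namespace FADC

variable {K : FADC}

/-- `a ≺ a'`: some basis element appears positively in `∂a` and negatively in `∂a'`. -/
def Rel (K : FADC) (a a' : K.B) : Prop := ∃ b, 0 < K.bd a b ∧ K.bd a' b < 0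

variable {lt : K.B → K.B → Prop}

/-- abbreviation for the loop-freeness property of the order `lt` -/
def LFP (K : FADC) (lt : K.B → K.B → Prop) : Prop :=
  ∀ (a : K.B) (r : ℕ), 0 < r →
    ∀ b ∈ (K.bdm^[r] (Finsupp.single a 1)).support,
      ∀ b' ∈ (K.bdp^[r] (Finsupp.single a 1)).support, lt b b'

lemma lf1 (hlf : LFP K lt) {a b b' : K.B} (hb : K.bd a b < 0) (hb' : 0 < K.bd a b') : lt b b' := by
  apply hlf a 1 one_pos b ?_ b' ?_
  · rw [Function.iterate_one]; exact mem_bdm_single.2 hb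
  · rw [Function.iterate_one]; exact mem_bdp_single.2 hb'

lemma transP (hso : IsStrictOrder K.B lt) (hlf : LFP K lt) {a a' : K.B} (h : Relation.TransGen (Rel K) a a') :
    ∀ b', 0 < K.bd a' b' → ∃ b, 0 < K.bd a b ∧ lt b b' := by
  induction h with
  | single h =>
      intro b' hb'
      obtain ⟨b₀, h1, h2⟩ := h
      exact ⟨b₀, h1, lf1 hlf h2 hb'⟩
  | tail _ hrel ih =>
      intro b' hb'
      obtain ⟨b₀, h1, h2⟩ := hrel
      obtain ⟨b₁, hb₁, hlt₁⟩ := ih b₀ h1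
      exact ⟨b₁, hb₁, hso.toIsTrans.trans _ _ _ hlt₁ (lf1 hlf h2 hb')⟩

lemma no_all_smaller {β : Type*} {r : β → β → Prop} (htr : ∀ x y z, r x y → r y z → r x z)
    (s : Finset β) (hirr : ∀ x ∈ s, ¬ r x x)
    (hne : s.Nonempty) (h : ∀ b ∈ s, ∃ b' ∈ s, r b' b) : False := by
  haveI : IsTrans { x // x ∈ s } (fun x y => r x.1 y.1) := ⟨fun a b c => htr _ _ _⟩
  haveI : IsIrrefl { x // x ∈ s } (fun x y => r x.1 y.1) := ⟨fun x => hirr x.1 x.2⟩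
  obtain ⟨m, -, hm⟩ :=
    (Finite.wellFounded_of_trans_of_irrefl
      (fun (x y : { x // x ∈ s }) => r x.1 y.1)).has_min Set.univ
      ⟨⟨hne.choose, hne.choose_spec⟩, trivial⟩
  obtain ⟨b', hb', hr⟩ := h m.1 m.2
  exact hm ⟨b', hb'⟩ trivial hr

lemma rel_no_cycle (hso : IsStrictOrder K.B lt) (hlf : LFP K lt) (hU : K.Unital) {a : K.B} (ha : 1 ≤ K.dim a)
    (h : Relation.TransGen (Rel K) a a) : False := by
  have P := transP hso hlf h
  obtain ⟨b0, hb0⟩ := exists_pos_bd hU a ha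
  apply no_all_smaller (r := lt) (fun x y z => hso.toIsTrans.trans x y z)
    (K.bdp (Finsupp.single a 1)).support (fun x _ => hso.toIrrefl.irrefl x)
    ⟨b0, mem_bdp_single.2 hb0⟩
  intro b hb
  obtain ⟨b', h1, h2⟩ := P b (mem_bdp_single.1 hb)
  exact ⟨b', mem_bdp_single.2 h1, h2⟩

lemma exists_rel_max (hso : IsStrictOrder K.B lt) (hlf : LFP K lt) (hU : K.Unital) (s : Finset K.B) (hne : s.Nonempty)
    (hd : ∀ a ∈ s, 1 ≤ K.dim a) :
    ∃ m ∈ s, ∀ a' ∈ s, ¬ Rel K m a' := by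
  by_contra hcon
  push_neg at hcon
  apply no_all_smaller (r := fun x y => Relation.TransGen (Rel K) y x)
    (fun _ _ _ hxy hyz => hyz.trans hxy) s
    (fun x hx ht => rel_no_cycle hso hlf hU (hd x hx) ht) hne
  intro b hb
  obtain ⟨a', ha', hrel⟩ := hcon b hb
  exact ⟨a', ha', Relation.TransGen.single hrel⟩

lemma exists_rel_min (hso : IsStrictOrder K.B lt) (hlf : LFP K lt) (hU : K.Unital) (s : Finset K.B) (hne : s.Nonempty)
    (hd : ∀ a ∈ s, 1 ≤ K.dim a) :
    ∃ m ∈ s, ∀ a' ∈ s, ¬ Rel K a' m := by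
  by_contra hcon
  push_neg at hcon
  apply no_all_smaller (r := fun x y => Relation.TransGen (Rel K) x y)
    (fun _ _ _ hxy hyz => hxy.trans hyz) s
    (fun x hx ht => rel_no_cycle hso hlf hU (hd x hx) ht) hne
  intro b hb
  obtain ⟨a', ha', hrel⟩ := hcon b hb
  exact ⟨a', ha', Relation.TransGen.single hrel⟩

end FADC

end Stmt9Order

section Stmt9Nu

open FADC

variable {K : FADC} {xm xp : ℕ → (K.B →₀ ℤ)}

lemma nu_c_nonneg (hx : NuMem K xm xp) {q : ℕ} {c : K.B →₀ ℤ}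
    (hc : c = xm q ∨ c = xp q) : ∀ a, 0 ≤ c a := by
  rcases hc with h | h <;> subst h
  exacts [hx.nonneg_m q, hx.nonneg_p q]

lemma nu_c_dim (hx : NuMem K xm xp) {q : ℕ} {c : K.B →₀ ℤ}
    (hc : c = xm q ∨ c = xp q) : ∀ a ∈ c.support, K.dim a = q := by
  rcases hc with h | h <;> subst h
  exacts [hx.dim_m q, hx.dim_p q]

lemma key_eq (hx : NuMem K xm xp) {q : ℕ} {c : K.B →₀ ℤ}
    (hc : c = xm (q + 1) ∨ c = xp (q + 1)) (b : K.B) :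
    xp q b = xm q b + ∑ a ∈ c.support, c a * K.bd a b := by
  have h : K.bdc c = xp q - xm q := by
    rcases hc with h | h <;> subst h
    exacts [hx.bd_m q, hx.bd_p q]
  have h2 := congrArg (fun w : K.B →₀ ℤ => w b) h
  simp only [Finsupp.sub_apply] at h2
  rw [bdc_apply] at h2
  linarith

/-- truncation/modification of a double sequence -/
def trunc (f : ℕ → (K.B →₀ ℤ)) (q : ℕ) (w z : K.B →₀ ℤ) : ℕ → (K.B →₀ ℤ) :=
  fun r => if r < q then f r else if r = q then w else if r = q + 1 then z else 0

lemma trunc_lt {f : ℕ → (K.B →₀ ℤ)} {q r : ℕ} {w z : K.B →₀ ℤ} (h : r < q) :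
    trunc f q w z r = f r := by simp [trunc, h]

lemma trunc_q {f : ℕ → (K.B →₀ ℤ)} {q : ℕ} {w z : K.B →₀ ℤ} :
    trunc f q w z q = w := by simp [trunc]

lemma trunc_q1 {f : ℕ → (K.B →₀ ℤ)} {q : ℕ} {w z : K.B →₀ ℤ} :
    trunc f q w z (q + 1) = z := by
  have h1 : ¬ (q + 1 < q) := by omega
  have h2 : ¬ (q + 1 = q) := by omega
  simp [trunc, h1, h2]

lemma trunc_gt {f : ℕ → (K.B →₀ ℤ)} {q r : ℕ} {w z : K.B →₀ ℤ} (h : q + 1 < r) :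
    trunc f q w z r = 0 := by
  have h1 : ¬ (r < q) := by omega
  have h2 : ¬ (r = q) := by omega
  have h3 : ¬ (r = q + 1) := by omega
  simp [trunc, h1, h2, h3]

lemma peel (hx : NuMem K xm xp) (q : ℕ) (c : K.B →₀ ℤ)
    (hc : c = xm (q + 1) ∨ c = xp (q + 1)) (aa : K.B) (haa : aa ∈ c.support)
    (dm dp : K.B →₀ ℤ) (hd : dp - dm = -(K.bd aa))
    (hdm0 : K.bdc dm = 0) (hdp0 : K.bdc dp = 0)
    (hdme : K.epsc dm = 0) (hdpe : K.epsc dp = 0)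
    (hdmd : ∀ b ∈ dm.support, K.dim b = q) (hdpd : ∀ b ∈ dp.support, K.dim b = q)
    (hnm : ∀ b, 0 ≤ xm q b + dm b) (hnp : ∀ b, 0 ≤ xp q b + dp b) :
    NuMem K (trunc xm q (xm q + dm) (c - Finsupp.single aa 1))
            (trunc xp q (xp q + dp) (c - Finsupp.single aa 1)) := by
  have hcd : ∀ a ∈ c.support, K.dim a = q + 1 := nu_c_dim hx hc
  have hcnn : ∀ a, 0 ≤ c a := nu_c_nonneg hx hc
  have hbdc : K.bdc c = xp q - xm q := by
    rcases hc with h | h <;> subst h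
    exacts [hx.bd_m q, hx.bd_p q]
  have haadim : K.dim aa = q + 1 := hcd aa haa
  have haa1 : 1 ≤ c aa := by
    have := Finsupp.mem_support_iff.1 haa
    have := hcnn aa
    omega
  -- dims of the new level-q+1 chain
  have hzdim : ∀ b ∈ (c - Finsupp.single aa 1).support, K.dim b = q + 1 := by
    intro b hb
    have hb' := Finsupp.mem_support_iff.1 hb
    rw [Finsupp.sub_apply] at hb'
    by_cases hbc : b ∈ c.support
    · exact hcd b hbc
    · have h0 : c b = 0 := Finsupp.notMem_support_iff.1 hbc
      rw [h0] at hb'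
      have hsb : Finsupp.single aa (1 : ℤ) b ≠ 0 := by
        intro h; rw [h] at hb'; simp at hb'
      have hba : b = aa := by
        by_contra hne
        exact hsb (Finsupp.single_eq_of_ne' (fun h => hne h.symm))
      rw [hba]; exact haadim
  have hznn : ∀ a, (0:ℤ) ≤ ((c - Finsupp.single aa 1 : K.B →₀ ℤ)) a := by
    intro a
    rw [Finsupp.sub_apply]
    by_cases h : a = aa
    · subst h; rw [Finsupp.single_eq_same]; omega
    · rw [Finsupp.single_eq_of_ne' (fun hh => h hh.symm)]
      have := hcnn a; omega
  -- boundary of the new level-q+1 chain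
  have hbdz : K.bdc (c - Finsupp.single aa 1) = (xp q + dp) - (xm q + dm) := by
    rw [← bdcH_eq, map_sub, bdcH_eq, bdcH_eq, hbdc, bdc_single]
    have h1 : (xp q + dp) - (xm q + dm) = (xp q - xm q) + (dp - dm) := by abel
    rw [h1, hd]
    abel
  constructor
  · -- dim_m
    intro r b hb
    rcases Nat.lt_trichotomy r q with h | h | h
    · rw [trunc_lt h] at hb; exact hx.dim_m r b hb
    · subst h
      rw [trunc_q] at hb
      have hb' := Finsupp.mem_support_iff.1 hb
      rw [Finsupp.add_apply] at hb'
      by_cases h1 : xm r b = 0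
      · have h2 : dm b ≠ 0 := by intro h; rw [h1, h] at hb'; simp at hb'
        exact hdmd b (Finsupp.mem_support_iff.2 h2)
      · exact hx.dim_m r b (Finsupp.mem_support_iff.2 h1)
    · rcases Nat.lt_or_ge (q + 1) r with h' | h'
      · rw [trunc_gt h'] at hb; simp at hb
      · have : r = q + 1 := by omega
        subst this
        rw [trunc_q1] at hb
        exact hzdim b hb
  · -- dim_p
    intro r b hb
    rcases Nat.lt_trichotomy r q with h | h | h
    · rw [trunc_lt h] at hb; exact hx.dim_p r b hb
    · subst h
      rw [trunc_q] at hb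
      have hb' := Finsupp.mem_support_iff.1 hb
      rw [Finsupp.add_apply] at hb'
      by_cases h1 : xp r b = 0
      · have h2 : dp b ≠ 0 := by intro h; rw [h1, h] at hb'; simp at hb'
        exact hdpd b (Finsupp.mem_support_iff.2 h2)
      · exact hx.dim_p r b (Finsupp.mem_support_iff.2 h1)
    · rcases Nat.lt_or_ge (q + 1) r with h' | h'
      · rw [trunc_gt h'] at hb; simp at hb
      · have : r = q + 1 := by omega
        subst this
        rw [trunc_q1] at hb
        exact hzdim b hb
  · -- nonneg_m
    intro r b
    rcases Nat.lt_trichotomy r q with h | h | h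
    · rw [trunc_lt h]; exact hx.nonneg_m r b
    · subst h; rw [trunc_q, Finsupp.add_apply]; exact hnm b
    · rcases Nat.lt_or_ge (q + 1) r with h' | h'
      · rw [trunc_gt h']; simp
      · have : r = q + 1 := by omega
        subst this
        rw [trunc_q1]; exact hznn b
  · -- nonneg_p
    intro r b
    rcases Nat.lt_trichotomy r q with h | h | h
    · rw [trunc_lt h]; exact hx.nonneg_p r b
    · subst h; rw [trunc_q, Finsupp.add_apply]; exact hnp b
    · rcases Nat.lt_or_ge (q + 1) r with h' | h'
      · rw [trunc_gt h']; simp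
      · have : r = q + 1 := by omega
        subst this
        rw [trunc_q1]; exact hznn b
  · -- fin
    exact ⟨q + 1, fun r hr => ⟨trunc_gt hr, trunc_gt hr⟩⟩
  · -- eps_m
    rcases Nat.eq_zero_or_pos q with h | h
    · subst h
      rw [trunc_q, ← epscH_eq, map_add, epscH_eq, epscH_eq, hx.eps_m, hdme]
      norm_num
    · rw [trunc_lt h]; exact hx.eps_m
  · -- eps_p
    rcases Nat.eq_zero_or_pos q with h | h
    · subst h
      rw [trunc_q, ← epscH_eq, map_add, epscH_eq, epscH_eq, hx.eps_p, hdpe]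
      norm_num
    · rw [trunc_lt h]; exact hx.eps_p
  · -- bd_m
    intro r
    rcases Nat.lt_trichotomy (r + 1) q with h | h | h
    · rw [trunc_lt h, trunc_lt (by omega), trunc_lt (by omega)]
      exact hx.bd_m r
    · have hrq : r < q := by omega
      subst h
      rw [trunc_q, trunc_lt hrq, trunc_lt hrq, ← bdcH_eq, map_add, bdcH_eq, bdcH_eq,
        hdm0, add_zero]
      exact hx.bd_m r
    · rcases Nat.lt_trichotomy r q with h' | h' | h'
      · omega
      · subst h'
        rw [trunc_q1, trunc_q, trunc_q, hbdz]
      · rcases Nat.lt_or_ge (q + 1) r with h'' | h''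
        · rw [trunc_gt (by omega), trunc_gt (by omega), trunc_gt (by omega), bdc_zero]
          · simp
        · have : r = q + 1 := by omega
          subst this
          rw [trunc_gt (by omega), trunc_q1, trunc_q1, bdc_zero]
          simp
  · -- bd_p
    intro r
    rcases Nat.lt_trichotomy (r + 1) q with h | h | h
    · rw [trunc_lt h, trunc_lt (by omega), trunc_lt (by omega)]
      exact hx.bd_p r
    · have hrq : r < q := by omega
      subst h
      rw [trunc_q, trunc_lt hrq, trunc_lt hrq, ← bdcH_eq, map_add, bdcH_eq, bdcH_eq,
        hdp0, add_zero]
      exact hx.bd_p r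
    · rcases Nat.lt_trichotomy r q with h' | h' | h'
      · omega
      · subst h'
        rw [trunc_q1, trunc_q, trunc_q, hbdz]
      · rcases Nat.lt_or_ge (q + 1) r with h'' | h''
        · rw [trunc_gt (by omega), trunc_gt (by omega), trunc_gt (by omega), bdc_zero]
          · simp
        · have : r = q + 1 := by omega
          subst this
          rw [trunc_gt (by omega), trunc_q1, trunc_q1, bdc_zero]
          simp
end Stmt9Nu

section Stmt9Simple

open FADC

variable {K : FADC}

lemma nu_simple {lt : K.B → K.B → Prop} (hso : IsStrictOrder K.B lt) (hlf : LFP K lt)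
    (hU : K.Unital) :
    ∀ (q : ℕ) (xm xp : ℕ → (K.B →₀ ℤ)), NuMem K xm xp →
      (∀ b, xm q b ≤ 1) ∧ (∀ b, xp q b ≤ 1) := by
  intro q
  induction q with
  | zero =>
      intro xm xp hx
      have base : ∀ (w : K.B →₀ ℤ), (∀ b, 0 ≤ w b) → (∀ b ∈ w.support, K.dim b = 0) →
          K.epsc w = 1 → ∀ b, w b ≤ 1 := by
        intro w hw hd he b
        by_contra hcon
        push_neg at hcon
        have hbmem : b ∈ w.support := Finsupp.mem_support_iff.2 (by omega)
        have heps : ∀ a ∈ w.support, K.eps a = 1 := by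
          intro a ha
          have h0 := (hU a).1
          rw [hd a ha] at h0
          simp only [Function.iterate_zero, id_eq] at h0
          rw [epsc, Finsupp.sum_single_index (by ring)] at h0
          simpa using h0
        have hsum : K.epsc w = ∑ a ∈ w.support, w a * K.eps a := by rw [epsc, Finsupp.sum]
        rw [hsum] at he
        have hle : w b * K.eps b ≤ ∑ a ∈ w.support, w a * K.eps a := by
          apply Finset.single_le_sum (fun a ha => ?_) hbmem
          rw [heps a ha, mul_one]; exact hw a
        rw [heps b hbmem, mul_one] at hle
        omega
      exact ⟨base (xm 0) (hx.nonneg_m 0) (hx.dim_m 0) hx.eps_m,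
             base (xp 0) (hx.nonneg_p 0) (hx.dim_p 0) hx.eps_p⟩
  | succ q ih =>
      intro xm xp hx
      have H : ∀ (N : ℕ) (xm xp : ℕ → (K.B →₀ ℤ)), NuMem K xm xp →
          ∀ c : K.B →₀ ℤ, (c = xm (q+1) ∨ c = xp (q+1)) → K.sigH c ≤ (N:ℤ) →
          ∀ a₀, c a₀ ≤ 1 := by
        intro N
        induction N with
        | zero =>
            intro xm xp hx c hc hN a₀
            have := le_sigH c (nu_c_nonneg hx hc) a₀
            have h0 : ((0:ℕ):ℤ) = 0 := rfl
            rw [h0] at hN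
            linarith
        | succ N ihN =>
            intro xm xp hx c hc hN a₀
            by_contra hcon
            push_neg at hcon
            have hcnn := nu_c_nonneg hx hc
            have hcd := nu_c_dim hx hc
            have ha₀ : a₀ ∈ c.support := Finsupp.mem_support_iff.2 (by omega)
            obtain ⟨aa, haas, hmax⟩ := exists_rel_max hso hlf hU c.support ⟨a₀, ha₀⟩
              (fun a ha => by rw [hcd a ha]; omega)
            have hkey : ∀ b, 0 < K.bd aa b → ∀ a ∈ c.support, 0 ≤ K.bd a b := by
              intro b hb a ha
              by_contra hneg
              exact hmax a ha ⟨b, hb, by omega⟩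
            have hvb : ∀ b, 0 < K.bd aa b → c aa * K.bd aa b ≤ xp q b := by
              intro b hb
              have hk := key_eq hx hc b
              have hterm : c aa * K.bd aa b ≤ ∑ a ∈ c.support, c a * K.bd a b :=
                Finset.single_le_sum (fun a ha => mul_nonneg (hcnn a) (hkey b hb a ha)) haas
              have hnn := hx.nonneg_m q b
              linarith
            by_cases h2 : 2 ≤ c aa
            · obtain ⟨b, hb⟩ := exists_pos_bd hU aa (by rw [hcd aa haas]; omega)
              have h1 := hvb b hb
              have hsimp := (ih xm xp hx).2 b
              nlinarith
            · have haa1 : c aa = 1 := by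
                have := Finsupp.mem_support_iff.1 haas
                have := hcnn aa
                omega
              have hne : aa ≠ a₀ := by intro h; rw [h] at haa1; omega
              have hnp : ∀ b, 0 ≤ xp q b + (-(K.bd aa)) b := by
                intro b
                rw [Finsupp.neg_apply]
                by_cases hb : 0 < K.bd aa b
                · have := hvb b hb; rw [haa1, one_mul] at this; omega
                · have := hx.nonneg_p q b; omega
              have hx' := peel hx q c hc aa haas 0 (-(K.bd aa))
                (by rw [sub_zero]) bdc_zero
                (by rw [← bdcH_eq, map_neg, bdcH_eq, bdc_bd, neg_zero]) epsc_zero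
                (by rw [← epscH_eq, map_neg, epscH_eq, epsc_bd, neg_zero])
                (by intro b hb; simp at hb)
                (by
                  intro b hb
                  rw [Finsupp.support_neg] at hb
                  have h3 := K.bd_dim aa b hb
                  have h4 := hcd aa haas
                  omega)
                (fun b => by simpa using hx.nonneg_m q b)
                hnp
              have hsig : K.sigH (c - Finsupp.single aa 1) ≤ (N:ℤ) := by
                have hs : K.sigH (c - Finsupp.single aa 1) = K.sigH c - 1 := by
                  rw [map_sub, sigH_single]
                have hcast : ((N+1:ℕ):ℤ) = (N:ℤ) + 1 := by push_cast; ring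
                rw [hcast] at hN
                rw [hs]
                linarith
              have hrec := ihN _ _ hx' (c - Finsupp.single aa 1) (Or.inl trunc_q1.symm)
                hsig a₀
              rw [Finsupp.sub_apply, Finsupp.single_eq_of_ne' hne] at hrec
              omega
      constructor <;> intro b
      · exact H (K.sigH (xm (q+1))).toNat xm xp hx (xm (q+1)) (Or.inl rfl)
          (Int.self_le_toNat _) b
      · exact H (K.sigH (xp (q+1))).toNat xm xp hx (xp (q+1)) (Or.inr rfl)
          (Int.self_le_toNat _) b

end Stmt9Simple

section Stmt9Disj

open FADC

variable {K : FADC}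

lemma nu_disj {lt : K.B → K.B → Prop} (hso : IsStrictOrder K.B lt) (hlf : LFP K lt)
    (hU : K.Unital) (q : ℕ) :
    ∀ (N : ℕ) (xm xp : ℕ → (K.B →₀ ℤ)), NuMem K xm xp →
      ∀ c : K.B →₀ ℤ, (c = xm (q+1) ∨ c = xp (q+1)) → K.sigH c ≤ (N:ℤ) →
      ∀ a a', a ∈ c.support → a' ∈ c.support → a ≠ a' → ∀ b,
        ¬(0 < K.bd a b ∧ 0 < K.bd a' b) ∧ ¬(K.bd a b < 0 ∧ K.bd a' b < 0) := by
  intro N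
  induction N with
  | zero =>
      intro xm xp hx c hc hN a a' ha ha' hne b
      exfalso
      have h1 := le_sigH c (nu_c_nonneg hx hc) a
      have h2 := Finsupp.mem_support_iff.1 ha
      have h3 := nu_c_nonneg hx hc a
      have h0 : ((0:ℕ):ℤ) = 0 := rfl
      rw [h0] at hN
      have h4 : 1 ≤ c a := by omega
      linarith
  | succ N ihN =>
      intro xm xp hx c hc hN a a' ha ha' hne b
      classical
      have hcnn := nu_c_nonneg hx hc
      have hcd := nu_c_dim hx hc
      have hdim1 : ∀ x ∈ c.support, 1 ≤ K.dim x := fun x hxs => by rw [hcd x hxs]; omega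
      have hsig : ∀ aa : K.B, K.sigH (c - Finsupp.single aa 1) ≤ (N:ℤ) := by
        intro aa
        have hs : K.sigH (c - Finsupp.single aa 1) = K.sigH c - 1 := by
          rw [map_sub, sigH_single]
        have hcast : ((N+1:ℕ):ℤ) = (N:ℤ)+1 := by push_cast; ring
        rw [hcast] at hN; rw [hs]; linarith
      have hmem' : ∀ aa x : K.B, x ∈ c.support → (aa = x → ¬ c aa = 1) →
          x ∈ (c - Finsupp.single aa 1).support := by
        intro aa x hxs hcond
        rw [Finsupp.mem_support_iff, Finsupp.sub_apply]
        by_cases hax : aa = x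
        · have h1 := hcond hax
          subst hax
          rw [Finsupp.single_eq_same]
          have := Finsupp.mem_support_iff.1 hxs
          have := hcnn aa
          omega
        · rw [Finsupp.single_eq_of_ne' hax]
          have := Finsupp.mem_support_iff.1 hxs
          omega
      have hpair : ({a, a'} : Finset K.B) ⊆ c.support := by
        intro x hxmem
        rcases Finset.mem_insert.1 hxmem with h | h
        · subst h; exact ha
        · rw [Finset.mem_singleton.1 h]; exact ha'
      have h1 : 1 ≤ c a := by have := Finsupp.mem_support_iff.1 ha; have := hcnn a; omega
      have h1' : 1 ≤ c a' := by have := Finsupp.mem_support_iff.1 ha'; have := hcnn a'; omega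
      constructor
      · rintro ⟨hba, hba'⟩
        obtain ⟨aa, haas, hmax⟩ := exists_rel_max hso hlf hU c.support ⟨a, ha⟩ hdim1
        have haa1 : 1 ≤ c aa := by
          have := Finsupp.mem_support_iff.1 haas; have := hcnn aa; omega
        have hkey : ∀ b', 0 < K.bd aa b' → ∀ x ∈ c.support, 0 ≤ K.bd x b' := by
          intro b' hb' x hxs
          by_contra hneg
          exact hmax x hxs ⟨b', hb', by omega⟩
        by_cases hsplit : (aa = a ∨ aa = a') ∧ c aa = 1
        · obtain ⟨hor, haac1⟩ := hsplit
          have hbaa : 0 < K.bd aa b := by rcases hor with h | h <;> subst h <;> assumption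
          have hsum2 : c a * K.bd a b + c a' * K.bd a' b ≤
              ∑ x ∈ c.support, c x * K.bd x b := by
            rw [← Finset.sum_pair (f := fun x => c x * K.bd x b) hne]
            exact Finset.sum_le_sum_of_subset_of_nonneg hpair
              (fun x hxs _ => mul_nonneg (hcnn x) (hkey b hbaa x hxs))
          have hk := key_eq hx hc b
          have hsimp := (nu_simple hso hlf hU q xm xp hx).2 b
          have hm1 : 1 ≤ c a * K.bd a b := by nlinarith
          have hm2 : 1 ≤ c a' * K.bd a' b := by nlinarith
          have hnn := hx.nonneg_m q b
          linarith
        · push_neg at hsplit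
          have hnp : ∀ b', 0 ≤ xp q b' + (-(K.bd aa)) b' := by
            intro b'
            rw [Finsupp.neg_apply]
            by_cases hb' : 0 < K.bd aa b'
            · have hk := key_eq hx hc b'
              have hterm : c aa * K.bd aa b' ≤ ∑ x ∈ c.support, c x * K.bd x b' :=
                Finset.single_le_sum
                  (fun x hxs => mul_nonneg (hcnn x) (hkey b' hb' x hxs)) haas
              have hnn := hx.nonneg_m q b'
              nlinarith [mul_nonneg (by omega : (0:ℤ) ≤ c aa - 1)
                (by omega : (0:ℤ) ≤ K.bd aa b')]
            · have := hx.nonneg_p q b'; omega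
          have hx' := peel hx q c hc aa haas 0 (-(K.bd aa))
            (by rw [sub_zero]) bdc_zero
            (by rw [← bdcH_eq, map_neg, bdcH_eq, bdc_bd, neg_zero]) epsc_zero
            (by rw [← epscH_eq, map_neg, epscH_eq, epsc_bd, neg_zero])
            (by intro b' hb'; simp at hb')
            (by
              intro b' hb'
              rw [Finsupp.support_neg] at hb'
              have h3 := K.bd_dim aa b' hb'
              have h4 := hcd aa haas
              omega)
            (fun b' => by simpa using hx.nonneg_m q b')
            hnp
          exact (ihN _ _ hx' (c - Finsupp.single aa 1) (Or.inl trunc_q1.symm)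
            (hsig aa) a a'
            (hmem' aa a ha (fun hax => hsplit (Or.inl hax)))
            (hmem' aa a' ha' (fun hax => hsplit (Or.inr hax))) hne b).1 ⟨hba, hba'⟩
      · rintro ⟨hba, hba'⟩
        obtain ⟨aa, haas, hmin⟩ := exists_rel_min hso hlf hU c.support ⟨a, ha⟩ hdim1
        have haa1 : 1 ≤ c aa := by
          have := Finsupp.mem_support_iff.1 haas; have := hcnn aa; omega
        have hkey : ∀ b', K.bd aa b' < 0 → ∀ x ∈ c.support, K.bd x b' ≤ 0 := by
          intro b' hb' x hxs
          by_contra hneg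
          exact hmin x hxs ⟨b', by omega, hb'⟩
        by_cases hsplit : (aa = a ∨ aa = a') ∧ c aa = 1
        · obtain ⟨hor, haac1⟩ := hsplit
          have hbaa : K.bd aa b < 0 := by rcases hor with h | h <;> subst h <;> assumption
          have hsum2 : c a * (-K.bd a b) + c a' * (-K.bd a' b) ≤
              ∑ x ∈ c.support, c x * (-K.bd x b) := by
            rw [← Finset.sum_pair (f := fun x => c x * (-K.bd x b)) hne]
            exact Finset.sum_le_sum_of_subset_of_nonneg hpair
              (fun x hxs _ => mul_nonneg (hcnn x) (by have := hkey b hbaa x hxs; omega))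
          have hflip : ∑ x ∈ c.support, c x * (-K.bd x b) =
              -∑ x ∈ c.support, c x * K.bd x b := by
            rw [← Finset.sum_neg_distrib]
            exact Finset.sum_congr rfl (fun x _ => by ring)
          rw [hflip] at hsum2
          have hk := key_eq hx hc b
          have hsimp := (nu_simple hso hlf hU q xm xp hx).1 b
          have hm1 : 1 ≤ c a * (-K.bd a b) := by nlinarith
          have hm2 : 1 ≤ c a' * (-K.bd a' b) := by nlinarith
          have hnn := hx.nonneg_p q b
          linarith
        · push_neg at hsplit
          have hnm : ∀ b', 0 ≤ xm q b' + (K.bd aa) b' := by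
            intro b'
            by_cases hb' : K.bd aa b' < 0
            · have hk := key_eq hx hc b'
              have hterm : c aa * (-K.bd aa b') ≤ ∑ x ∈ c.support, c x * (-K.bd x b') :=
                Finset.single_le_sum
                  (fun x hxs => mul_nonneg (hcnn x)
                    (by have := hkey b' hb' x hxs; omega)) haas
              have hflip : ∑ x ∈ c.support, c x * (-K.bd x b') =
                  -∑ x ∈ c.support, c x * K.bd x b' := by
                rw [← Finset.sum_neg_distrib]
                exact Finset.sum_congr rfl (fun x _ => by ring)
              rw [hflip] at hterm
              have hnn := hx.nonneg_p q b'
              nlinarith [mul_nonneg (by omega : (0:ℤ) ≤ c aa - 1)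
                (by omega : (0:ℤ) ≤ -K.bd aa b')]
            · have := hx.nonneg_m q b'; omega
          have hx' := peel hx q c hc aa haas (K.bd aa) 0
            (by rw [zero_sub]) (bdc_bd aa) bdc_zero (epsc_bd aa) epsc_zero
            (by
              intro b' hb'
              have h3 := K.bd_dim aa b' hb'
              have h4 := hcd aa haas
              omega)
            (by intro b' hb'; simp at hb')
            hnm
            (fun b' => by simpa using hx.nonneg_p q b')
          exact (ihN _ _ hx' (c - Finsupp.single aa 1) (Or.inl trunc_q1.symm)
            (hsig aa) a a'
            (hmem' aa a ha (fun hax => hsplit (Or.inl hax)))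
            (hmem' aa a' ha' (fun hax => hsplit (Or.inr hax))) hne b).2 ⟨hba, hba'⟩

end Stmt9Disj

section Stmt9Final

open FADC

variable {K : FADC}

lemma gch_apply (xq c : K.B →₀ ℤ) (b : K.B) :
    K.gch xq c b = xq b + ∑ a ∈ c.support, c a * max (K.bd a b) 0 := by
  rw [gch, Finsupp.add_apply, Finsupp.sum_apply, Finsupp.sum]
  congr 1
  apply Finset.sum_congr rfl
  intro a _
  rw [Finsupp.smul_apply, bdp_single_apply, smul_eq_mul]

end Stmt9Final


/-- The networks `G_q^α(x)` are well defined: distinct terms `a ≠ a'` of `x_{q+1}^α`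
have disjoint `∂⁺`-supports and disjoint `∂⁻`-supports, and every term of `∂⁺a` or
`∂⁻a` for `a` a term of `x_{q+1}^α` is a term of `g_q^α(x)`. -/
theorem stmt9 (K : FADC) (hLF : K.LoopFree) (hU : K.Unital)
    (xm xp : ℕ → (K.B →₀ ℤ)) (hx : NuMem K xm xp) (q : ℕ)
    (xa : ℕ → K.B →₀ ℤ) (hxa : xa = xm ∨ xa = xp) :
    (∀ a a' : K.B, a ∈ (xa (q + 1)).support → a' ∈ (xa (q + 1)).support → a ≠ a' →
      Disjoint (K.bdp (Finsupp.single a 1)).support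
        (K.bdp (Finsupp.single a' 1)).support ∧
      Disjoint (K.bdm (Finsupp.single a 1)).support
        (K.bdm (Finsupp.single a' 1)).support) ∧
    (∀ a ∈ (xa (q + 1)).support, ∀ b : K.B,
      (b ∈ (K.bdp (Finsupp.single a 1)).support ∨
        b ∈ (K.bdm (Finsupp.single a 1)).support) →
      b ∈ (K.gch (xm q) (xa (q + 1))).support) := by
  obtain ⟨lt, hso, hlf⟩ := hLF
  have hc : xa (q+1) = xm (q+1) ∨ xa (q+1) = xp (q+1) := by
    rcases hxa with h | h <;> subst h
    exacts [Or.inl rfl, Or.inr rfl]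
  have hcnn := nu_c_nonneg hx hc
  constructor
  · intro a a' ha ha' hne
    have hN : K.sigH (xa (q+1)) ≤ ((K.sigH (xa (q+1))).toNat : ℤ) := Int.self_le_toNat _
    have hd := nu_disj hso hlf hU q (K.sigH (xa (q+1))).toNat xm xp hx (xa (q+1)) hc hN
      a a' ha ha' hne
    constructor
    · rw [Finset.disjoint_left]
      intro b hb hb'
      exact (hd b).1 ⟨FADC.mem_bdp_single.1 hb, FADC.mem_bdp_single.1 hb'⟩
    · rw [Finset.disjoint_left]
      intro b hb hb'
      exact (hd b).2 ⟨FADC.mem_bdm_single.1 hb, FADC.mem_bdm_single.1 hb'⟩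
  · intro a ha b hb
    rw [Finsupp.mem_support_iff, gch_apply]
    have hnn := hx.nonneg_m q b
    have hsumnn : ∀ x ∈ (xa (q+1)).support, 0 ≤ (xa (q+1)) x * max (K.bd x b) 0 :=
      fun x _ => mul_nonneg (hcnn x) (le_max_right _ _)
    have h1 : 1 ≤ (xa (q+1)) a := by
      have := Finsupp.mem_support_iff.1 ha; have := hcnn a; omega
    rcases hb with hb | hb
    · have hpos : 0 < K.bd a b := FADC.mem_bdp_single.1 hb
      have hterm : (xa (q+1)) a * max (K.bd a b) 0 ≤
          ∑ x ∈ (xa (q+1)).support, (xa (q+1)) x * max (K.bd x b) 0 :=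
        Finset.single_le_sum hsumnn ha
      have hm : 1 ≤ (xa (q+1)) a * max (K.bd a b) 0 := by
        have h2 : 1 ≤ max (K.bd a b) 0 := by omega
        nlinarith
      have hlt : 0 < xm q b + ∑ x ∈ (xa (q+1)).support, (xa (q+1)) x * max (K.bd x b) 0 := by
        linarith
      exact hlt.ne'
    · have hneg : K.bd a b < 0 := FADC.mem_bdm_single.1 hb
      have hid : ∑ x ∈ (xa (q+1)).support, (xa (q+1)) x * max (K.bd x b) 0 =
          (∑ x ∈ (xa (q+1)).support, (xa (q+1)) x * K.bd x b) +
          ∑ x ∈ (xa (q+1)).support, (xa (q+1)) x * max (-K.bd x b) 0 := by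
        rw [← Finset.sum_add_distrib]
        apply Finset.sum_congr rfl
        intro x _
        have h3 : max (K.bd x b) 0 = K.bd x b + max (-K.bd x b) 0 := by omega
        rw [h3]; ring
      have hk := key_eq hx hc b
      have hsumnn' : ∀ x ∈ (xa (q+1)).support, 0 ≤ (xa (q+1)) x * max (-K.bd x b) 0 :=
        fun x _ => mul_nonneg (hcnn x) (le_max_right _ _)
      have hterm : (xa (q+1)) a * max (-K.bd a b) 0 ≤
          ∑ x ∈ (xa (q+1)).support, (xa (q+1)) x * max (-K.bd x b) 0 :=
        Finset.single_le_sum hsumnn' ha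
      have hm : 1 ≤ (xa (q+1)) a * max (-K.bd a b) 0 := by
        have h2 : 1 ≤ max (-K.bd a b) 0 := by omega
        nlinarith
      have hnnp := hx.nonneg_p q b
      have hlt : 0 < xm q b + ∑ x ∈ (xa (q+1)).support, (xa (q+1)) x * max (K.bd x b) 0 := by
        rw [hid]
        linarith
      exact hlt.ne'
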